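/- With r̃₁(P₁) = γ(h₁P₁), r̃₂(P₁) = γ(h₂P) − γ(h₂P₁), g(P₁) = (1/h₁+P₁)/(1/h₂+P₁), and a₁(P₁) = g/(r̃₂ + g·r̃₁), the function 1/a₁(P₁) = r̃₂(P₁)/g(P₁) + r̃₁(P₁) is strictly decreasing on [0, P] when h₁ > h₂ > 0 and P > 0; specifically its derivative equals −(h₁−h₂)h₁h₂/(h₂+h₁h₂P₁)² · [γ(h₂P) − γ(h₂P₁)], which is negative for P₁ < P. -/

import Mathlib

noncomputable def γ (x : ℝ) : ℝ := Real.logb 2 (1 + x) / 2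

theorem gbc_inv_a₁_strictAnti (h₁ h₂ P : ℝ)
    (hh : h₂ < h₁) (hh₂ : 0 < h₂) (hP : 0 < P) :
    let g : ℝ → ℝ := fun P₁ => (1 / h₁ + P₁) / (1 / h₂ + P₁)
    let f : ℝ → ℝ := fun P₁ => (γ (h₂ * P) - γ (h₂ * P₁)) / g P₁ + γ (h₁ * P₁)
    StrictAntiOn f (Set.Icc 0 P) ∧
    ∀ P₁ ∈ Set.Icc (0 : ℝ) P,
      deriv f P₁ = -((h₁ - h₂) * h₁ * h₂ / (h₂ + h₁ * h₂ * P₁) ^ 2)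
          * (γ (h₂ * P) - γ (h₂ * P₁)) ∧
      (P₁ < P → deriv f P₁ < 0) := by
  intro g f
  have hh₁ : 0 < h₁ := lt_trans hh₂ hh
  have hL : Real.log 2 ≠ 0 := ne_of_gt (Real.log_pos one_lt_two)
  have hf : f = fun y => (γ (h₂ * P) - γ (h₂ * y)) * (1 / h₂ + y) / (1 / h₁ + y)
      + γ (h₁ * y) := by
    funext y
    simp only [f, g, div_div_eq_mul_div]
  have key : ∀ x : ℝ, 0 ≤ x →
      HasDerivAt f (-((h₁ - h₂) * h₁ * h₂ / (h₂ + h₁ * h₂ * x) ^ 2)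
        * (γ (h₂ * P) - γ (h₂ * x))) x := by
    intro x hx
    have hu : (0:ℝ) < 1 + h₂ * x := by nlinarith
    have hv : (0:ℝ) < 1 + h₁ * x := by nlinarith
    have hw : (0:ℝ) < 1 / h₁ + x := by positivity
    -- derivative of γ (h₂ * ·)
    have lin2 : HasDerivAt (fun y : ℝ => 1 + h₂ * y) h₂ x := by
      simpa using ((hasDerivAt_id x).const_mul h₂).const_add 1
    have log2 : HasDerivAt (fun y : ℝ => Real.log (1 + h₂ * y)) (h₂ / (1 + h₂ * x)) x := by
      have := (Real.hasDerivAt_log (ne_of_gt hu)).comp x lin2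
      simpa [div_eq_inv_mul, Function.comp_def] using this
    have γ2 : HasDerivAt (fun y : ℝ => γ (h₂ * y)) (h₂ / (1 + h₂ * x) / Real.log 2 / 2) x := by
      have := (log2.div_const (Real.log 2)).div_const 2
      simpa [γ, Real.logb] using this
    -- derivative of γ (h₁ * ·)
    have lin1 : HasDerivAt (fun y : ℝ => 1 + h₁ * y) h₁ x := by
      simpa using ((hasDerivAt_id x).const_mul h₁).const_add 1
    have log1 : HasDerivAt (fun y : ℝ => Real.log (1 + h₁ * y)) (h₁ / (1 + h₁ * x)) x := by
      have := (Real.hasDerivAt_log (ne_of_gt hv)).comp x lin1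
      simpa [div_eq_inv_mul, Function.comp_def] using this
    have γ1 : HasDerivAt (fun y : ℝ => γ (h₁ * y)) (h₁ / (1 + h₁ * x) / Real.log 2 / 2) x := by
      have := (log1.div_const (Real.log 2)).div_const 2
      simpa [γ, Real.logb] using this
    -- numerator
    have num : HasDerivAt (fun y : ℝ => (γ (h₂ * P) - γ (h₂ * y)) * (1 / h₂ + y))
        ((0 - h₂ / (1 + h₂ * x) / Real.log 2 / 2) * (1 / h₂ + x)
          + (γ (h₂ * P) - γ (h₂ * x)) * 1) x :=
      ((hasDerivAt_const x (γ (h₂ * P))).sub γ2).mul ((hasDerivAt_id x).const_add (1 / h₂))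
    have den : HasDerivAt (fun y : ℝ => 1 / h₁ + y) 1 x := (hasDerivAt_id x).const_add (1 / h₁)
    have main := (num.div den (ne_of_gt hw)).add γ1
    rw [hf]
    refine HasDerivAt.congr_deriv main ?_
    simp only [γ, Real.logb]
    have h2x : (1:ℝ) + h₂ * x ≠ 0 := ne_of_gt hu
    have h1x : (1:ℝ) + h₁ * x ≠ 0 := ne_of_gt hv
    have hwne : (1:ℝ) / h₁ + x ≠ 0 := ne_of_gt hw
    have hden : h₂ + h₁ * h₂ * x ≠ 0 := by positivity
    field_simp
    ring
  have derivEq : ∀ x ∈ Set.Icc (0:ℝ) P,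
      deriv f x = -((h₁ - h₂) * h₁ * h₂ / (h₂ + h₁ * h₂ * x) ^ 2)
        * (γ (h₂ * P) - γ (h₂ * x)) := fun x hx => (key x hx.1).deriv
  have negD : ∀ x, 0 ≤ x → x < P →
      -((h₁ - h₂) * h₁ * h₂ / (h₂ + h₁ * h₂ * x) ^ 2) * (γ (h₂ * P) - γ (h₂ * x)) < 0 := by
    intro x hx hxP
    have hu : (0:ℝ) < 1 + h₂ * x := by nlinarith
    have hγ : γ (h₂ * x) < γ (h₂ * P) := by
      have : Real.logb 2 (1 + h₂ * x) < Real.logb 2 (1 + h₂ * P) := by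
        apply Real.logb_lt_logb one_lt_two hu
        nlinarith
      simpa [γ] using (by linarith : Real.logb 2 (1 + h₂ * x) / 2 < Real.logb 2 (1 + h₂ * P) / 2)
    have hcoef : (0:ℝ) < (h₁ - h₂) * h₁ * h₂ / (h₂ + h₁ * h₂ * x) ^ 2 := by
      have : (0:ℝ) < h₂ + h₁ * h₂ * x := by positivity
      have h12 : (0:ℝ) < h₁ - h₂ := by linarith
      positivity
    nlinarith
  refine ⟨?_, fun x hx => ⟨derivEq x hx, fun hxP => by
    rw [derivEq x hx]; exact negD x hx.1 hxP⟩⟩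
  apply strictAntiOn_of_deriv_neg (convex_Icc 0 P)
  · exact fun x hx => (key x hx.1).differentiableAt.continuousAt.continuousWithinAt
  · intro x hx
    rw [interior_Icc] at hx
    rw [derivEq x ⟨le_of_lt hx.1, le_of_lt hx.2⟩]
    exact negD x (le_of_lt hx.1) hx.2
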